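/- Let p be a polynomial on ℝ² and α = (-sin φ₀, cos φ₀) a unit vector. Then the conditions ∂_α^{2s-1} p = 0 on the line (α,x) = 0 for s = 1,…,m hold if and only if in polar coordinates ∂_φ^{2s-1} p = 0 at φ = φ₀ for s = 1,…,m. -/

import Mathlib

open Polynomial

namespace Stmt1Aux

/-- Evaluation of a two-variable polynomial (inner variable `u`, outer variable `v`). -/
noncomputable def Ev (u v : ℝ) (Q : Polynomial (Polynomial ℝ)) : ℝ :=
  (Q.eval (Polynomial.C v)).eval u

/-- Derivative in the inner variable, applied coefficientwise. -/
noncomputable def dIn (Q : Polynomial (Polynomial ℝ)) : Polynomial (Polynomial ℝ) :=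
  ⟨⟨Finsupp.mapRange derivative derivative_zero Q.toFinsupp.coeff⟩⟩

lemma coeff_dIn (Q : Polynomial (Polynomial ℝ)) (k : ℕ) :
    (dIn Q).coeff k = derivative (Q.coeff k) := by
  rcases Q with ⟨f⟩
  simp [dIn, coeff, Finsupp.mapRange_apply]

/-- The angular derivative operator `u ∂_v - v ∂_u`. -/
noncomputable def Dop (Q : Polynomial (Polynomial ℝ)) : Polynomial (Polynomial ℝ) :=
  Polynomial.C Polynomial.X * derivative Q - Polynomial.X * dIn Q

lemma dIn_add (p q : Polynomial (Polynomial ℝ)) : dIn (p + q) = dIn p + dIn q := by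
  ext k; simp [coeff_dIn]

lemma dIn_monomial (n : ℕ) (h : Polynomial ℝ) :
    dIn (monomial n h) = monomial n (derivative h) := by
  ext k
  simp only [coeff_dIn, coeff_monomial, apply_ite derivative, derivative_zero]

lemma Ev_add (u v : ℝ) (p q : Polynomial (Polynomial ℝ)) :
    Ev u v (p + q) = Ev u v p + Ev u v q := by simp [Ev]

lemma Ev_monomial (u v : ℝ) (n : ℕ) (h : Polynomial ℝ) :
    Ev u v (monomial n h) = h.eval u * v ^ n := by
  simp [Ev, eval_monomial]

lemma Ev_zero_right (u : ℝ) (Q : Polynomial (Polynomial ℝ)) :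
    Ev u 0 Q = (Q.coeff 0).eval u := by
  simp [Ev, ← coeff_zero_eq_eval_zero]

lemma hasDerivAt_Ev (Q : Polynomial (Polynomial ℝ)) {f g : ℝ → ℝ} {θ f' g' : ℝ}
    (hf : HasDerivAt f f' θ) (hg : HasDerivAt g g' θ) :
    HasDerivAt (fun x => Ev (f x) (g x) Q)
      (Ev (f θ) (g θ) (dIn Q) * f' + Ev (f θ) (g θ) (derivative Q) * g') θ := by
  induction Q using Polynomial.induction_on' with
  | add p q hp hq =>
      have := hp.add hq
      have hfe : (fun x => Ev (f x) (g x) (p + q))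
          = fun x => Ev (f x) (g x) p + Ev (f x) (g x) q := funext fun x => Ev_add _ _ _ _
      rw [hfe]
      refine this.congr_deriv ?_
      simp [Ev_add, dIn_add]
      ring
  | monomial n h =>
      have h1 : HasDerivAt (fun x => h.eval (f x)) ((derivative h).eval (f θ) * f') θ :=
        (h.hasDerivAt (f θ)).comp θ hf
      have h2 : HasDerivAt (fun x => (g x) ^ n) ((n : ℝ) * (g θ) ^ (n - 1) * g') θ := hg.pow n
      have hfe : (fun x => Ev (f x) (g x) (monomial n h))
          = fun x => h.eval (f x) * (g x) ^ n := funext fun x => Ev_monomial _ _ _ _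
      rw [hfe]
      refine (h1.mul h2).congr_deriv ?_
      simp [Ev_monomial, dIn_monomial, derivative_monomial]
      ring

lemma iteratedDeriv_Ev_line (Q : Polynomial (Polynomial ℝ)) (ρ : ℝ) (n : ℕ) :
    iteratedDeriv n (fun t => Ev ρ t Q) = fun t => Ev ρ t (derivative^[n] Q) := by
  induction n with
  | zero => simp
  | succ n ih =>
      rw [iteratedDeriv_succ, ih]
      funext t
      have := hasDerivAt_Ev (derivative^[n] Q) (hasDerivAt_const t ρ) (hasDerivAt_id t)
      rw [Function.iterate_succ_apply']
      simpa using this.deriv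

lemma Ev_Dop (u v : ℝ) (Q : Polynomial (Polynomial ℝ)) :
    Ev u v (Dop Q) = u * Ev u v (derivative Q) - v * Ev u v (dIn Q) := by
  simp [Ev, Dop]

lemma iteratedDeriv_Ev_circle (Q : Polynomial (Polynomial ℝ)) (r φ₀ : ℝ) (n : ℕ) :
    iteratedDeriv n (fun φ => Ev (r * Real.cos (φ - φ₀)) (r * Real.sin (φ - φ₀)) Q)
      = fun φ => Ev (r * Real.cos (φ - φ₀)) (r * Real.sin (φ - φ₀)) (Dop^[n] Q) := by
  induction n with
  | zero => simp
  | succ n ih =>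
      rw [iteratedDeriv_succ, ih]
      funext φ
      have hF : HasDerivAt (fun φ : ℝ => r * Real.cos (φ - φ₀))
          (-(r * Real.sin (φ - φ₀))) φ := by
        have := ((Real.hasDerivAt_cos (φ - φ₀)).comp φ ((hasDerivAt_id φ).sub_const φ₀)).const_mul r
        exact this.congr_deriv (by ring)
      have hG : HasDerivAt (fun φ : ℝ => r * Real.sin (φ - φ₀))
          (r * Real.cos (φ - φ₀)) φ := by
        have := ((Real.hasDerivAt_sin (φ - φ₀)).comp φ ((hasDerivAt_id φ).sub_const φ₀)).const_mul r
        exact this.congr_deriv (by ring)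
      have := hasDerivAt_Ev (Dop^[n] Q) hF hG
      rw [Function.iterate_succ_apply']
      rw [this.deriv, Ev_Dop]
      ring

lemma coeff_Dop_zero (R : Polynomial (Polynomial ℝ)) :
    (Dop R).coeff 0 = Polynomial.X * R.coeff 1 := by
  simp [Dop, coeff_derivative, mul_comm]

lemma coeff_Dop_succ (R : Polynomial (Polynomial ℝ)) (j : ℕ) :
    (Dop R).coeff (j + 1)
      = Polynomial.X * (R.coeff (j + 2) * ((j : Polynomial ℝ) + 2)) - derivative (R.coeff j) := by
  have h1 : (Polynomial.X * dIn R).coeff (j + 1) = (dIn R).coeff j := coeff_X_mul _ _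
  rw [Dop, coeff_sub, coeff_C_mul, coeff_derivative, h1, coeff_dIn]
  push_cast
  ring_nf

/-- Key combinatorial identity for iterates of `Dop`. -/
lemma coeff_Dop_iterate (Q : Polynomial (Polynomial ℝ)) (T : ℕ)
    (hyp : ∀ k, Odd k → k < T → Q.coeff k = 0) :
    ∀ n j, Odd (n + j) → n + j ≤ T →
      (Dop^[n] Q).coeff j
        = ((∏ i ∈ Finset.range n, (j + 1 + i) : ℕ) : Polynomial ℝ)
            * (Polynomial.X ^ n * Q.coeff (n + j)) := by
  intro n
  induction n with
  | zero => intro j _ _; simp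
  | succ n ih =>
      intro j hodd hle
      rw [Function.iterate_succ_apply']
      match j with
      | 0 =>
          rw [coeff_Dop_zero, ih 1 (by simpa [Nat.add_comm] using hodd) (by omega)]
          have hp : (∏ i ∈ Finset.range (n + 1), (0 + 1 + i) : ℕ)
              = (∏ i ∈ Finset.range n, (1 + 1 + i) : ℕ) * 1 := by
            rw [Finset.prod_range_succ']
            congr 1
            apply Finset.prod_congr rfl; intro i _; ring
          rw [hp]
          push_cast
          ring
      | j + 1 =>
          rw [coeff_Dop_succ, ih (j + 2) (by
                have : n + (j + 2) = n + 1 + (j + 1) := by ring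
                rw [this]; exact hodd) (by omega),
            ih j (by
                rcases hodd with ⟨t, ht⟩
                exact ⟨t - 1, by omega⟩) (by omega)]
          have hz : Q.coeff (n + j) = 0 := by
            apply hyp _ (by rcases hodd with ⟨t, ht⟩; exact ⟨t - 1, by omega⟩) (by omega)
          rw [hz, mul_zero, mul_zero, derivative_zero, sub_zero]
          have hp : (∏ i ∈ Finset.range (n + 1), (j + 1 + 1 + i) : ℕ)
              = (∏ i ∈ Finset.range n, (j + 2 + 1 + i) : ℕ) * (j + 2) := by
            rw [Finset.prod_range_succ']
            congr 1
            apply Finset.prod_congr rfl; intro i _; ring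
          rw [hp]
          have harg : n + (j + 2) = n + 1 + (j + 1) := by ring
          rw [harg]
          push_cast
          ring

end Stmt1Aux

/-- A polynomial on ℝ² as a function. -/
noncomputable def pf (P : MvPolynomial (Fin 2) ℝ) (x : ℝ × ℝ) : ℝ :=
  MvPolynomial.eval ![x.1, x.2] P

namespace Stmt1Aux

/-- The polynomial `P` rewritten in rotated coordinates. -/
noncomputable def Qof (P : MvPolynomial (Fin 2) ℝ) (a b : ℝ) : Polynomial (Polynomial ℝ) :=
  MvPolynomial.eval₂
    ((Polynomial.C : Polynomial ℝ →+* Polynomial (Polynomial ℝ)).comp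
      (Polynomial.C : ℝ →+* Polynomial ℝ))
    ![Polynomial.C (Polynomial.C a) * Polynomial.C Polynomial.X
        - Polynomial.C (Polynomial.C b) * Polynomial.X,
      Polynomial.C (Polynomial.C b) * Polynomial.C Polynomial.X
        + Polynomial.C (Polynomial.C a) * Polynomial.X] P

lemma Ev_Qof (P : MvPolynomial (Fin 2) ℝ) (a b u v : ℝ) :
    Ev u v (Qof P a b) = pf P (u * a - v * b, u * b + v * a) := by
  have hk : Ev u v (Qof P a b)
      = ((Polynomial.evalRingHom u).comp
          (Polynomial.evalRingHom (Polynomial.C v : Polynomial ℝ))) (Qof P a b) := rfl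
  rw [hk, Qof, MvPolynomial.eval₂_comp_left]
  have h1 : ((Polynomial.evalRingHom u).comp
        (Polynomial.evalRingHom (Polynomial.C v : Polynomial ℝ))).comp
        ((Polynomial.C : Polynomial ℝ →+* Polynomial (Polynomial ℝ)).comp
          (Polynomial.C : ℝ →+* Polynomial ℝ)) = RingHom.id ℝ := by
    ext x; simp
  have h2 : (((Polynomial.evalRingHom u).comp
        (Polynomial.evalRingHom (Polynomial.C v : Polynomial ℝ))) ∘
        ![Polynomial.C (Polynomial.C a) * Polynomial.C Polynomial.X
            - Polynomial.C (Polynomial.C b) * Polynomial.X,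
          Polynomial.C (Polynomial.C b) * Polynomial.C Polynomial.X
            + Polynomial.C (Polynomial.C a) * Polynomial.X])
      = ![u * a - v * b, u * b + v * a] := by
    funext i
    fin_cases i <;>
      · show ((Polynomial.evalRingHom u).comp (Polynomial.evalRingHom (Polynomial.C v))) _ = _
        simp
        ring
  rw [h1, h2, MvPolynomial.eval₂_id]
  simp [pf]

end Stmt1Aux

/-- For `α = (-sin φ₀, cos φ₀)`, the odd normal derivatives `∂_α^{2s-1} p`, `s = 1,…,m`,
vanish on the line `(α,x)=0` iff the odd angular derivatives `∂_φ^{2s-1} p` vanish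
at `φ = φ₀` in polar coordinates. -/
theorem stmt1 (P : MvPolynomial (Fin 2) ℝ) (m : ℕ) (φ₀ : ℝ) :
    (∀ x : ℝ × ℝ, (-Real.sin φ₀) * x.1 + Real.cos φ₀ * x.2 = 0 →
      ∀ s : ℕ, 1 ≤ s → s ≤ m →
        iteratedDeriv (2*s-1)
          (fun t : ℝ => pf P (x.1 + t * (-Real.sin φ₀), x.2 + t * Real.cos φ₀)) 0 = 0)
    ↔ (∀ r : ℝ, 0 ≤ r → ∀ s : ℕ, 1 ≤ s → s ≤ m →
        iteratedDeriv (2*s-1)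
          (fun φ : ℝ => pf P (r * Real.cos φ, r * Real.sin φ)) φ₀ = 0) := by
  have hpyth : Real.sin φ₀ ^ 2 + Real.cos φ₀ ^ 2 = 1 := Real.sin_sq_add_cos_sq φ₀
  set Q := Stmt1Aux.Qof P (Real.cos φ₀) (Real.sin φ₀) with hQdef
  -- reduction of the line (normal-derivative) conditions
  have hLval : ∀ (x : ℝ × ℝ), (-Real.sin φ₀) * x.1 + Real.cos φ₀ * x.2 = 0 → ∀ n : ℕ,
      iteratedDeriv n (fun t : ℝ => pf P (x.1 + t * (-Real.sin φ₀), x.2 + t * Real.cos φ₀)) 0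
        = ((Polynomial.derivative^[n] Q).coeff 0).eval
            (Real.cos φ₀ * x.1 + Real.sin φ₀ * x.2) := by
    intro x hline n
    have hfe : (fun t : ℝ => pf P (x.1 + t * (-Real.sin φ₀), x.2 + t * Real.cos φ₀))
        = fun t => Stmt1Aux.Ev (Real.cos φ₀ * x.1 + Real.sin φ₀ * x.2) t Q := by
      funext t
      rw [hQdef, Stmt1Aux.Ev_Qof]
      congr 1
      have e1 : x.1 + t * (-Real.sin φ₀)
          = (Real.cos φ₀ * x.1 + Real.sin φ₀ * x.2) * Real.cos φ₀ - t * Real.sin φ₀ := by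
        linear_combination (-x.1) * hpyth - Real.sin φ₀ * hline
      have e2 : x.2 + t * Real.cos φ₀
          = (Real.cos φ₀ * x.1 + Real.sin φ₀ * x.2) * Real.sin φ₀ + t * Real.cos φ₀ := by
        linear_combination (-x.2) * hpyth + Real.cos φ₀ * hline
      rw [e1, e2]
    rw [hfe, Stmt1Aux.iteratedDeriv_Ev_line]
    exact Stmt1Aux.Ev_zero_right _ _
  -- reduction of the polar (angular-derivative) conditions
  have hRval : ∀ (r : ℝ) (n : ℕ),
      iteratedDeriv n (fun φ : ℝ => pf P (r * Real.cos φ, r * Real.sin φ)) φ₀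
        = ((Stmt1Aux.Dop^[n] Q).coeff 0).eval r := by
    intro r n
    have hfe : (fun φ : ℝ => pf P (r * Real.cos φ, r * Real.sin φ))
        = fun φ => Stmt1Aux.Ev (r * Real.cos (φ - φ₀)) (r * Real.sin (φ - φ₀)) Q := by
      funext φ
      rw [hQdef, Stmt1Aux.Ev_Qof]
      congr 1
      have e1 : r * Real.cos φ
          = (r * Real.cos (φ - φ₀)) * Real.cos φ₀ - (r * Real.sin (φ - φ₀)) * Real.sin φ₀ := by
        rw [Real.cos_sub, Real.sin_sub]
        linear_combination (-(r * Real.cos φ)) * hpyth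
      have e2 : r * Real.sin φ
          = (r * Real.cos (φ - φ₀)) * Real.sin φ₀ + (r * Real.sin (φ - φ₀)) * Real.cos φ₀ := by
        rw [Real.cos_sub, Real.sin_sub]
        linear_combination (-(r * Real.sin φ)) * hpyth
      rw [e1, e2]
    rw [hfe, Stmt1Aux.iteratedDeriv_Ev_circle]
    simp [Stmt1Aux.Ev_zero_right]
  have hfact : ∀ k : ℕ, (Polynomial.derivative^[k] Q).coeff 0 = k.factorial • Q.coeff k := by
    intro k
    rw [Polynomial.coeff_iterate_derivative]
    simp [Nat.descFactorial_self]
  have keyL : (∀ x : ℝ × ℝ, (-Real.sin φ₀) * x.1 + Real.cos φ₀ * x.2 = 0 →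
      ∀ s : ℕ, 1 ≤ s → s ≤ m →
        iteratedDeriv (2*s-1)
          (fun t : ℝ => pf P (x.1 + t * (-Real.sin φ₀), x.2 + t * Real.cos φ₀)) 0 = 0)
      ↔ (∀ k : ℕ, 1 ≤ k → k ≤ m → Q.coeff (2*k-1) = 0) := by
    constructor
    · intro h k hk1 hk2
      have hall : ∀ ρ : ℝ, ((Polynomial.derivative^[2*k-1] Q).coeff 0).eval ρ = 0 := by
        intro ρ
        have hl : (-Real.sin φ₀) * (ρ * Real.cos φ₀, ρ * Real.sin φ₀).1
            + Real.cos φ₀ * (ρ * Real.cos φ₀, ρ * Real.sin φ₀).2 = 0 := by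
          show (-Real.sin φ₀) * (ρ * Real.cos φ₀) + Real.cos φ₀ * (ρ * Real.sin φ₀) = 0
          ring
        have hx := h (ρ * Real.cos φ₀, ρ * Real.sin φ₀) hl k hk1 hk2
        rw [hLval _ hl] at hx
        have hpt : Real.cos φ₀ * (ρ * Real.cos φ₀, ρ * Real.sin φ₀).1
            + Real.sin φ₀ * (ρ * Real.cos φ₀, ρ * Real.sin φ₀).2 = ρ := by
          show Real.cos φ₀ * (ρ * Real.cos φ₀) + Real.sin φ₀ * (ρ * Real.sin φ₀) = ρ
          linear_combination ρ * hpyth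
        rw [hpt] at hx
        exact hx
      have hzero : (Polynomial.derivative^[2*k-1] Q).coeff 0 = 0 :=
        Polynomial.funext fun ρ => by rw [hall ρ]; simp
      rw [hfact, nsmul_eq_mul] at hzero
      rcases mul_eq_zero.mp hzero with hc | hc
      · exact absurd hc (by exact_mod_cast (Nat.factorial_ne_zero _))
      · exact hc
    · intro h x hline k hk1 hk2
      rw [hLval x hline, hfact, h k hk1 hk2]
      simp
  have keyR : (∀ r : ℝ, 0 ≤ r → ∀ s : ℕ, 1 ≤ s → s ≤ m →
        iteratedDeriv (2*s-1)
          (fun φ : ℝ => pf P (r * Real.cos φ, r * Real.sin φ)) φ₀ = 0)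
      ↔ (∀ k : ℕ, 1 ≤ k → k ≤ m → Q.coeff (2*k-1) = 0) := by
    constructor
    · intro h k
      induction k using Nat.strong_induction_on with
      | _ k ih =>
        intro hk1 hk2
        have hyp : ∀ j, Odd j → j < 2*k-1 → Q.coeff j = 0 := by
          intro j hj hlt
          rcases hj with ⟨t, ht⟩
          have hjj : j = 2*(t+1)-1 := by omega
          rw [hjj]
          exact ih (t+1) (by omega) (by omega) (by omega)
        have hco := Stmt1Aux.coeff_Dop_iterate Q (2*k-1) hyp (2*k-1) 0
          ⟨k-1, by omega⟩ (by omega)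
        have hall : ∀ r : ℝ, 0 ≤ r → ((Stmt1Aux.Dop^[2*k-1] Q).coeff 0).eval r = 0 := by
          intro r hr
          rw [← hRval]
          exact h r hr k hk1 hk2
        have hzero : (Stmt1Aux.Dop^[2*k-1] Q).coeff 0 = 0 := by
          apply Polynomial.eq_zero_of_infinite_isRoot
          apply Set.Infinite.mono (s := Set.Ici (0:ℝ))
          · intro r hr
            exact hall r hr
          · exact Set.Ici_infinite 0
        rw [hco] at hzero
        have hprod : (0:ℕ) < ∏ i ∈ Finset.range (2*k-1), (0 + 1 + i) :=
          Finset.prod_pos fun i _ => by omega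
        rcases mul_eq_zero.mp hzero with hc | hc
        · exact absurd hc (by exact_mod_cast hprod.ne')
        · rcases mul_eq_zero.mp hc with hc' | hc'
          · exact absurd hc' (pow_ne_zero _ Polynomial.X_ne_zero)
          · simpa using hc'
    · intro h r hr k hk1 hk2
      rw [hRval]
      have hyp : ∀ j, Odd j → j < 2*k-1 → Q.coeff j = 0 := by
        intro j hj hlt
        rcases hj with ⟨t, ht⟩
        have hjj : j = 2*(t+1)-1 := by omega
        rw [hjj]
        exact h (t+1) (by omega) (by omega)
      rw [Stmt1Aux.coeff_Dop_iterate Q (2*k-1) hyp (2*k-1) 0 ⟨k-1, by omega⟩ (by omega)]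
      have : Q.coeff (2*k-1 + 0) = 0 := by simpa using h k hk1 hk2
      rw [this]
      simp
  exact keyL.trans keyR.symm
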